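/- Let L be a real Hilbert space with inner product ⟨·,·⟩ and norm ‖·‖_L, and let V ⊆ L be a linear subspace equipped with a norm ‖·‖_V satisfying the Friedrichs inequality ‖w‖_L ≤ C_F·‖w‖_V for all w ∈ V, where C_F > 0. Define the dual seminorm n₋(g) := sup{⟨g, w⟩ : w ∈ V, ‖w‖_V ≤ 1} for g ∈ L. Let V_H ⊆ V be a linear subspace satisfying the inverse inequality ‖w_H‖_V ≤ C_inv·H⁻¹·‖w_H‖_L for all w_H ∈ V_H, where C_inv, H > 0, and let J : L → L be a linear map with J(L) ⊆ V_H such that ‖J g‖_L ≤ C_n·sup{⟨g, w_H⟩ : w_H ∈ V_H, ‖w_H‖_L ≤ 1} for all g ∈ L, where C_n > 0. Then n₋(J g) ≤ C_F·C_n·C_inv·H⁻¹·n₋(g) for every g ∈ L. -/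

import Mathlib

/-- Abstract form of the dual-norm stability estimate (estDual) from the proof of
Lemma 3.1 in Ljung–Maier–Målqvist, "A Space-Time Multiscale Method for Parabolic
Problems": ‖𝔉_H v‖_{H⁻¹} ≤ C_F·C_n·C_inv·H⁻¹·‖v‖_{H⁻¹}. -/
theorem dual_norm_stability
    {L : Type*} [NormedAddCommGroup L] [InnerProductSpace ℝ L]
    (V VH : Submodule ℝ L) (hVH : VH ≤ V)
    (nV : L → ℝ)
    (hnV_nonneg : ∀ w ∈ V, 0 ≤ nV w)
    (hnV_smul : ∀ (a : ℝ), ∀ w ∈ V, nV (a • w) = |a| * nV w)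
    (hnV_add : ∀ w ∈ V, ∀ w' ∈ V, nV (w + w') ≤ nV w + nV w')
    (hnV_def : ∀ w ∈ V, nV w = 0 → w = 0)
    (CF : ℝ) (hCF : 0 < CF)
    (hFriedrichs : ∀ w ∈ V, ‖w‖ ≤ CF * nV w)
    (Cinv Hp : ℝ) (hCinv : 0 < Cinv) (hHp : 0 < Hp)
    (hinv : ∀ wH ∈ VH, nV wH ≤ Cinv * Hp⁻¹ * ‖wH‖)
    (J : L →ₗ[ℝ] L) (hJmem : ∀ g : L, J g ∈ VH)
    (Cn : ℝ) (hCn : 0 < Cn)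
    (hJbound : ∀ g : L,
      ‖J g‖ ≤ Cn * sSup {r : ℝ | ∃ wH ∈ VH, ‖wH‖ ≤ 1 ∧ r = (inner ℝ g wH : ℝ)}) :
    ∀ g : L,
      sSup {r : ℝ | ∃ w ∈ V, nV w ≤ 1 ∧ r = (inner ℝ (J g) w : ℝ)} ≤
        CF * Cn * Cinv * Hp⁻¹ *
          sSup {r : ℝ | ∃ w ∈ V, nV w ≤ 1 ∧ r = (inner ℝ g w : ℝ)} := by
  intro g
  set c : ℝ := Cinv * Hp⁻¹ with hc
  have hcpos : 0 < c := mul_pos hCinv (inv_pos.mpr hHp)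
  set SV : Set ℝ := {r : ℝ | ∃ w ∈ V, nV w ≤ 1 ∧ r = (inner ℝ g w : ℝ)} with hSV
  -- nV 0 = 0
  have hnV0 : nV (0 : L) = 0 := by
    have := hnV_smul 0 0 V.zero_mem
    simpa using this
  have h0SV : (0 : ℝ) ∈ SV := ⟨0, V.zero_mem, by simp [hnV0], by simp⟩
  have hSVbdd : BddAbove SV := by
    refine ⟨CF * ‖g‖, ?_⟩
    rintro r ⟨w, hw, hw1, rfl⟩
    calc (inner ℝ g w : ℝ) ≤ ‖g‖ * ‖w‖ := real_inner_le_norm g w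
      _ ≤ ‖g‖ * (CF * nV w) := by
          exact mul_le_mul_of_nonneg_left (hFriedrichs w hw) (norm_nonneg g)
      _ ≤ ‖g‖ * (CF * 1) := by
          have : CF * nV w ≤ CF * 1 := mul_le_mul_of_nonneg_left hw1 hCF.le
          exact mul_le_mul_of_nonneg_left this (norm_nonneg g)
      _ = CF * ‖g‖ := by ring
  have hSVnonneg : 0 ≤ sSup SV := le_csSup hSVbdd h0SV
  -- sSup S_H ≤ c * sSup SV
  have hSH : sSup {r : ℝ | ∃ wH ∈ VH, ‖wH‖ ≤ 1 ∧ r = (inner ℝ g wH : ℝ)} ≤ c * sSup SV := by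
    apply Real.sSup_le
    · rintro r ⟨wH, hwH, hwH1, rfl⟩
      have hmemV : wH ∈ V := hVH hwH
      set w : L := c⁻¹ • wH with hwdef
      have hwV : w ∈ V := V.smul_mem _ hmemV
      have hnw : nV w ≤ 1 := by
        have h1 : nV w = c⁻¹ * nV wH := by
          rw [hwdef, hnV_smul c⁻¹ wH hmemV, abs_of_pos (inv_pos.mpr hcpos)]
        have h2 : nV wH ≤ c * ‖wH‖ := hinv wH hwH
        have h3 : c * ‖wH‖ ≤ c * 1 := mul_le_mul_of_nonneg_left hwH1 hcpos.le
        rw [h1]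
        calc c⁻¹ * nV wH ≤ c⁻¹ * (c * 1) :=
              mul_le_mul_of_nonneg_left (h2.trans h3) (inv_pos.mpr hcpos).le
          _ = 1 := by field_simp
      have hinSV : (inner ℝ g w : ℝ) ∈ SV := ⟨w, hwV, hnw, rfl⟩
      have : (inner ℝ g wH : ℝ) = c * (inner ℝ g w : ℝ) := by
        rw [hwdef, real_inner_smul_right]
        field_simp
      rw [this]
      exact mul_le_mul_of_nonneg_left (le_csSup hSVbdd hinSV) hcpos.le
    · exact mul_nonneg hcpos.le hSVnonneg
  have hJ : ‖J g‖ ≤ Cn * (c * sSup SV) :=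
    (hJbound g).trans (mul_le_mul_of_nonneg_left hSH hCn.le)
  apply Real.sSup_le
  · rintro r ⟨w, hw, hw1, rfl⟩
    have hwn : ‖w‖ ≤ CF := by
      calc ‖w‖ ≤ CF * nV w := hFriedrichs w hw
        _ ≤ CF * 1 := mul_le_mul_of_nonneg_left hw1 hCF.le
        _ = CF := mul_one CF
    calc (inner ℝ (J g) w : ℝ) ≤ ‖J g‖ * ‖w‖ := real_inner_le_norm _ _
      _ ≤ (Cn * (c * sSup SV)) * CF := by
          apply mul_le_mul hJ hwn (norm_nonneg w)
          exact mul_nonneg hCn.le (mul_nonneg hcpos.le hSVnonneg)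
      _ = CF * Cn * Cinv * Hp⁻¹ * sSup SV := by rw [hc]; ring
  · have : 0 ≤ CF * Cn * Cinv * Hp⁻¹ :=
      le_of_lt (by positivity)
    exact mul_nonneg this hSVnonneg
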